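/- Let G be a finite simple graph, let k ≥ 2, let (Γ_i)_{i∈V(G)} be complex d×d orthogonal projection matrices of rank one with Γ_iΓ_j = 0 for all edges (i,j) of G, and suppose there are weights w^G : V(G) → ℝ≥0 with Σ_{i∈I} w^G_i ≤ 1 for every independent set I of G and Σ_i w^G_i Γ_i ≥ η₁·𝟙 with η₁ ≥ 0. Then there exists a rank-k projective representation (Π_x)_{x∈V(G∨C_{2k+1})} of the disjunctive product G∨C_{2k+1} in dimension (2k+1)d together with weights w : V(G∨C_{2k+1}) → ℝ≥0 such that Σ_{x∈K} w_x ≤ 1 for every independent set K of G∨C_{2k+1} and Σ_x w_x Π_x ≥ η₁·𝟙. -/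

import Mathlib

open scoped Classical ComplexOrder Kronecker
noncomputable section

/-- The disjunctive product of two simple graphs. -/
def disjProd {α β : Type*} (G : SimpleGraph α) (F : SimpleGraph β) :
    SimpleGraph (α × β) where
  Adj p q := G.Adj p.1 q.1 ∨ F.Adj p.2 q.2
  symm := ⟨fun _ _ h => h.imp (fun h' => h'.symm) (fun h' => h'.symm)⟩
  loopless := ⟨fun p h => h.elim (fun h' => G.irrefl h') (fun h' => F.irrefl h')⟩

/-- A set of vertices is independent if it is pairwise non-adjacent. -/
def IsIndep {α : Type*} (G : SimpleGraph α) (S : Set α) : Prop :=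
  S.Pairwise fun a b => ¬ G.Adj a b

/-- The cycle graph on `ZMod n`, where `j` is adjacent to `j ± 1`. -/
def cycGraph (n : ℕ) : SimpleGraph (ZMod n) where
  Adj j k := j ≠ k ∧ (k = j + 1 ∨ j = k + 1)
  symm := ⟨fun _ _ h => ⟨h.1.symm, h.2.symm⟩⟩
  loopless := ⟨fun _ h => h.1 rfl⟩


namespace SICAux
open Matrix

lemma trace_eq_rank_of_proj {m : Type*} [Fintype m] [DecidableEq m]
    {A : Matrix m m ℂ} (hA : A.IsHermitian) (h : A * A = A) :
    A.trace = (A.rank : ℂ) := by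
  set U : Matrix m m ℂ := (hA.eigenvectorUnitary : Matrix m m ℂ) with hU
  have hU1 : star U * U = 1 := Matrix.mem_unitaryGroup_iff'.mp (hA.eigenvectorUnitary).2
  set D : Matrix m m ℂ := Matrix.diagonal (RCLike.ofReal ∘ hA.eigenvalues) with hD
  have hspec : A = U * D * star U := hA.spectral_theorem
  have key : U * (D * D) * star U = U * D * star U := by
    have h2 : (U * D * star U) * (U * D * star U) = U * D * star U := by rw [← hspec]; exact h
    calc U * (D * D) * star U = (U * D) * (star U * U) * (D * star U) := by
          rw [hU1]; simp only [Matrix.mul_one]; simp only [Matrix.mul_assoc]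
      _ = (U * D * star U) * (U * D * star U) := by simp only [Matrix.mul_assoc]
      _ = U * D * star U := h2
  have hDD : D * D = D := by
    calc D * D = (star U * U) * (D * D) * (star U * U) := by rw [hU1]; simp
      _ = star U * (U * (D * D) * star U) * U := by simp only [Matrix.mul_assoc]
      _ = star U * (U * D * star U) * U := by rw [key]
      _ = (star U * U) * D * (star U * U) := by simp only [Matrix.mul_assoc]
      _ = D := by rw [hU1]; simp
  have heig : ∀ i, hA.eigenvalues i = 0 ∨ hA.eigenvalues i = 1 := by
    intro i
    have h3 : ((hA.eigenvalues i : ℂ)) * (hA.eigenvalues i : ℂ) = (hA.eigenvalues i : ℂ) := by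
      have := congrFun (congrFun hDD i) i
      simpa [hD, Matrix.diagonal_mul_diagonal, Matrix.diagonal_apply_eq] using this
    have hr : hA.eigenvalues i * hA.eigenvalues i = hA.eigenvalues i := by
      exact_mod_cast h3
    rcases mul_eq_zero.mp (show hA.eigenvalues i * (hA.eigenvalues i - 1) = 0 by
        ring_nf; linarith) with h0 | h1
    · exact Or.inl h0
    · exact Or.inr (by linarith [sub_eq_zero.mp h1])
  have htr : A.trace = ∑ i, (hA.eigenvalues i : ℂ) := by
    conv_lhs => rw [hspec]
    rw [Matrix.trace_mul_cycle, hU1, Matrix.one_mul, hD, Matrix.trace_diagonal]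
    rfl
  rw [htr, hA.rank_eq_card_non_zero_eigs]
  have h4 : ∀ i, (hA.eigenvalues i : ℂ) = if hA.eigenvalues i ≠ 0 then 1 else 0 := by
    intro i
    rcases heig i with h0 | h1
    · simp [h0]
    · simp [h1]
  rw [Finset.sum_congr rfl fun i _ => h4 i, Finset.sum_boole, Fintype.card_subtype]

lemma count_val (k : ℕ) (hk : 1 ≤ k) (g : ZMod (2*k+1) → ZMod (2*k+1))
    (hg : Function.Bijective g) :
    ∑ x : ZMod (2*k+1), (if (g x).val ∈ Finset.Icc 1 k then (1:ℂ) else 0) = k := by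
  haveI : NeZero (2*k+1) := ⟨by omega⟩
  rw [Fintype.sum_bijective g hg _
    (fun x : ZMod (2*k+1) => if x.val ∈ Finset.Icc 1 k then (1:ℂ) else 0) (fun x => rfl)]
  rw [Finset.sum_boole]
  norm_cast
  have hcard : (Finset.univ.filter (fun x : ZMod (2*k+1) => x.val ∈ Finset.Icc 1 k)).card
      = (Finset.Icc 1 k).card := by
    apply Finset.card_bij (fun x _ => x.val)
    · intro a ha
      exact (Finset.mem_filter.mp ha).2
    · intro a ha b hb hab
      exact ZMod.val_injective _ hab
    · intro v hv
      have hvlt : v < 2*k+1 := by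
        have := (Finset.mem_Icc.mp hv).2; omega
      refine ⟨(v : ZMod (2*k+1)), ?_, ?_⟩
      · simp only [Finset.mem_filter, Finset.mem_univ, true_and]
        rwa [ZMod.val_cast_of_lt hvlt]
      · rw [ZMod.val_cast_of_lt hvlt]
  rw [hcard, Nat.card_Icc]
  omega

lemma key_disj (k : ℕ) (hk : 2 ≤ k) (j a : ZMod (2*k+1)) :
    ¬( (((a - j) * ((k:ZMod (2*k+1)) + 1)).val ∈ Finset.Icc 1 k) ∧
       (((a - (j+1)) * ((k:ZMod (2*k+1)) + 1)).val ∈ Finset.Icc 1 k) ) := by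
  haveI : NeZero (2*k+1) := ⟨by omega⟩
  rintro ⟨h1, h2⟩
  set K1 : ZMod (2*k+1) := (k : ZMod (2*k+1)) + 1 with hK1
  set t : ZMod (2*k+1) := (a - j) * K1 with ht
  set s : ZMod (2*k+1) := (a - (j+1)) * K1 with hs
  have hts : t = s + K1 := by rw [ht, hs]; ring
  have hK1val : K1.val = k + 1 := by
    have : K1 = ((k+1 : ℕ) : ZMod (2*k+1)) := by push_cast; rfl
    rw [this, ZMod.val_cast_of_lt (by omega)]
  have h1' := Finset.mem_Icc.mp h1
  have h2' := Finset.mem_Icc.mp h2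
  have hval : t.val = (s.val + (k+1)) % (2*k+1) := by
    rw [hts, ZMod.val_add, hK1val]
  rcases Nat.lt_or_ge (s.val + (k+1)) (2*k+1) with hlt | hge
  · rw [Nat.mod_eq_of_lt hlt] at hval; omega
  · have heq : s.val + (k+1) = 2*k+1 := by omega
    rw [heq, Nat.mod_self] at hval; omega

lemma cyc_indep (k : ℕ) (hk : 1 ≤ k) (T : Finset (ZMod (2*k+1)))
    (hT : IsIndep (cycGraph (2*k+1)) ↑T) : T.card ≤ k := by
  haveI : NeZero (2*k+1) := ⟨by omega⟩
  have hone : (1 : ZMod (2*k+1)) ≠ 0 := by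
    intro h
    have h2 : ((1:ℕ) : ZMod (2*k+1)) = ((0:ℕ) : ZMod (2*k+1)) := by push_cast; exact h
    have := congrArg ZMod.val h2
    rw [ZMod.val_cast_of_lt (by omega), ZMod.val_cast_of_lt (by omega)] at this
    omega
  have hne : ∀ j : ZMod (2*k+1), j ≠ j + 1 := by
    intro j h
    exact hone (by rwa [left_eq_add] at h)
  have hdisj : ∀ x ∈ T, ∀ y ∈ T, x ≠ y →
      Disjoint ({x, x+1} : Finset (ZMod (2*k+1))) {y, y+1} := by
    intro x hx y hy hxy
    have hadj : ¬ (cycGraph (2*k+1)).Adj x y :=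
      hT (Finset.mem_coe.mpr hx) (Finset.mem_coe.mpr hy) hxy
    rw [Finset.disjoint_left]
    intro z hz hz'
    simp only [Finset.mem_insert, Finset.mem_singleton] at hz hz'
    rcases hz with rfl | rfl <;> rcases hz' with h | h
    · exact hxy h
    · exact hadj ⟨hxy, Or.inr h⟩
    · exact hadj ⟨hxy, Or.inl h.symm⟩
    · exact hxy (by exact add_right_cancel h)
  have hcard : (T.biUnion fun j => ({j, j+1} : Finset (ZMod (2*k+1)))).card = 2 * T.card := by
    rw [Finset.card_biUnion hdisj]
    rw [Finset.sum_congr rfl (fun j _ => Finset.card_pair (hne j))]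
    rw [Finset.sum_const, smul_eq_mul, mul_comm]
  have hle : (T.biUnion fun j => ({j, j+1} : Finset (ZMod (2*k+1)))).card ≤ 2*k+1 := by
    have := Finset.card_le_univ (T.biUnion fun j => ({j, j+1} : Finset (ZMod (2*k+1))))
    rwa [ZMod.card] at this
  omega

lemma kron_conjT {m p : Type*} (A : Matrix m m ℂ) (B : Matrix p p ℂ) :
    (A ⊗ₖ B)ᴴ = Aᴴ ⊗ₖ Bᴴ := by
  ext ⟨i, j⟩ ⟨i', j'⟩
  simp [Matrix.conjTranspose_apply, Matrix.kroneckerMap_apply, star_mul']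

lemma sum_kron_left {ι m p : Type*} [Fintype ι] [Fintype m]
    (Q : ι → Matrix m m ℂ) (B : Matrix p p ℂ) :
    ∑ j : ι, (Q j ⊗ₖ B) = (∑ j : ι, Q j) ⊗ₖ B := by
  ext ⟨a, b⟩ ⟨a', b'⟩
  simp [Matrix.sum_apply, Matrix.kroneckerMap_apply, Finset.sum_mul]

lemma sum_kron_right {ι m p : Type*} [Fintype ι] [Fintype m]
    (A : Matrix m m ℂ) (B : ι → Matrix p p ℂ) :
    ∑ j : ι, (A ⊗ₖ B j) = A ⊗ₖ (∑ j : ι, B j) := by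
  ext ⟨a, b⟩ ⟨a', b'⟩
  simp [Matrix.sum_apply, Matrix.kroneckerMap_apply, Finset.mul_sum]

lemma kron_sub_right {m p : Type*} (A : Matrix m m ℂ) (B C : Matrix p p ℂ) :
    A ⊗ₖ (B - C) = A ⊗ₖ B - A ⊗ₖ C := by
  ext ⟨a, b⟩ ⟨a', b'⟩
  simp [Matrix.sub_apply, Matrix.kroneckerMap_apply, mul_sub]

lemma one_kron_psd {m p : Type*} [Fintype m] [Fintype p] [DecidableEq m] [DecidableEq p]
    {M : Matrix p p ℂ} (hM : M.PosSemidef) :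
    ((1 : Matrix m m ℂ) ⊗ₖ M).PosSemidef := by
  exact Matrix.PosSemidef.one.kronecker hM

def cfun (k : ℕ) (j a : ZMod (2*k+1)) : ℂ :=
  if ((a - j) * ((k:ZMod (2*k+1)) + 1)).val ∈ Finset.Icc 1 k then 1 else 0

def Qmat (k : ℕ) (j : ZMod (2*k+1)) : Matrix (ZMod (2*k+1)) (ZMod (2*k+1)) ℂ :=
  Matrix.diagonal (cfun k j)

lemma zmod_mul_inj (k : ℕ) (x y : ZMod (2*k+1))
    (h : x * ((k:ZMod (2*k+1))+1) = y * ((k:ZMod (2*k+1))+1)) : x = y := by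
  have hK2 : ((k:ZMod (2*k+1)) + 1) * 2 = 1 := by
    have h0 : ((2*k+1 : ℕ) : ZMod (2*k+1)) = 0 := ZMod.natCast_self _
    push_cast at h0
    linear_combination h0
  have h2 := congrArg (· * 2) h
  simpa [mul_assoc, hK2] using h2

lemma bij_a (k : ℕ) (j : ZMod (2*k+1)) :
    Function.Bijective (fun a : ZMod (2*k+1) => (a - j) * ((k:ZMod (2*k+1))+1)) := by
  rw [← Finite.injective_iff_bijective]
  intro a a' h
  exact sub_left_injective (zmod_mul_inj k _ _ h)

lemma bij_j (k : ℕ) (a : ZMod (2*k+1)) :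
    Function.Bijective (fun j : ZMod (2*k+1) => (a - j) * ((k:ZMod (2*k+1))+1)) := by
  rw [← Finite.injective_iff_bijective]
  intro j j' h
  exact sub_right_injective (zmod_mul_inj k _ _ h)

lemma Qmat_idem (k : ℕ) (j : ZMod (2*k+1)) : Qmat k j * Qmat k j = Qmat k j := by
  unfold Qmat
  rw [Matrix.diagonal_mul_diagonal]
  have h : (fun a => cfun k j a * cfun k j a) = cfun k j := by
    funext a; unfold cfun; split <;> simp
  rw [h]

lemma Qmat_herm (k : ℕ) (j : ZMod (2*k+1)) : (Qmat k j).IsHermitian := by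
  show (Qmat k j)ᴴ = Qmat k j
  unfold Qmat
  rw [Matrix.diagonal_conjTranspose]
  have h : star (cfun k j) = cfun k j := by
    funext a; simp only [Pi.star_apply]; unfold cfun; split <;> simp
  rw [h]

lemma Qmat_trace (k : ℕ) (hk : 1 ≤ k) (j : ZMod (2*k+1)) : (Qmat k j).trace = (k:ℂ) := by
  unfold Qmat
  rw [Matrix.trace_diagonal]
  simp only [cfun]
  exact count_val k hk (fun a : ZMod (2*k+1) => (a - j) * ((k:ZMod (2*k+1))+1)) (bij_a k j)

lemma Qmat_sum (k : ℕ) (hk : 1 ≤ k) :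
    ∑ j, Qmat k j = (k:ℂ) • (1 : Matrix (ZMod (2*k+1)) (ZMod (2*k+1)) ℂ) := by
  ext a b
  rw [Matrix.sum_apply]
  by_cases hab : a = b
  · subst hab
    simp only [Qmat, Matrix.diagonal_apply_eq, Matrix.smul_apply, Matrix.one_apply_eq,
      smul_eq_mul, mul_one]
    simp only [cfun]
    exact count_val k hk (fun j : ZMod (2*k+1) => (a - j) * ((k:ZMod (2*k+1))+1)) (bij_j k a)
  · simp [Qmat, Matrix.diagonal_apply_ne _ hab, Matrix.one_apply_ne hab]

lemma Qmat_orth (k : ℕ) (hk : 2 ≤ k) {j j' : ZMod (2*k+1)}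
    (hadj : (cycGraph (2*k+1)).Adj j j') : Qmat k j * Qmat k j' = 0 := by
  unfold Qmat
  rw [Matrix.diagonal_mul_diagonal]
  have hzero : (fun a => cfun k j a * cfun k j' a) = (fun _ => (0:ℂ)) := by
    funext a
    unfold cfun
    rcases hadj.2 with h | h
    · subst h
      by_cases h1 : ((a - j) * ((k:ZMod (2*k+1)) + 1)).val ∈ Finset.Icc 1 k
      · rw [if_neg (fun h2 => key_disj k hk j a ⟨h1, h2⟩), mul_zero]
      · rw [if_neg h1, zero_mul]
    · subst h
      by_cases h1 : ((a - j') * ((k:ZMod (2*k+1)) + 1)).val ∈ Finset.Icc 1 k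
      · rw [if_neg (fun h2 => key_disj k hk j' a ⟨h1, h2⟩), zero_mul]
      · rw [if_neg h1, mul_zero]
  rw [hzero]
  exact Matrix.diagonal_zero

end SICAux

open SICAux Matrix in
theorem exists_rank_k_SIC_PR {α : Type*} [Fintype α] (G : SimpleGraph α)
    (k d : ℕ) (hk : 2 ≤ k)
    (Γ : α → Matrix (Fin d) (Fin d) ℂ)
    (hΓherm : ∀ i, (Γ i).IsHermitian) (hΓidem : ∀ i, Γ i * Γ i = Γ i)
    (hΓrank : ∀ i, (Γ i).rank = 1)
    (hΓorth : ∀ i j, G.Adj i j → Γ i * Γ j = 0)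
    (wG : α → ℝ) (hw0 : ∀ i, 0 ≤ wG i)
    (hwI : ∀ I : Finset α, IsIndep G ↑I → ∑ i ∈ I, wG i ≤ 1)
    (η₁ : ℝ) (hη₁0 : 0 ≤ η₁)
    (hη₁ : Matrix.PosSemidef (∑ i, (wG i : ℂ) • Γ i - (η₁ : ℂ) • 1)) :
    ∃ P : α × ZMod (2 * k + 1) →
        Matrix (Fin ((2 * k + 1) * d)) (Fin ((2 * k + 1) * d)) ℂ,
      ∃ w : α × ZMod (2 * k + 1) → ℝ,
        (∀ x, (P x).IsHermitian) ∧ (∀ x, P x * P x = P x) ∧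
        (∀ x, (P x).rank = k) ∧
        (∀ x y, (disjProd G (cycGraph (2 * k + 1))).Adj x y → P x * P y = 0) ∧
        (∀ x, 0 ≤ w x) ∧
        (∀ K : Finset (α × ZMod (2 * k + 1)),
          IsIndep (disjProd G (cycGraph (2 * k + 1))) ↑K → ∑ x ∈ K, w x ≤ 1) ∧
        Matrix.PosSemidef (∑ x, (w x : ℂ) • P x - (η₁ : ℂ) • 1) := by
  classical
  haveI hNZ : NeZero (2*k+1) := ⟨by omega⟩
  have hk0C : (k:ℂ) ≠ 0 := by exact_mod_cast (by omega : k ≠ 0)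
  have hk0R : (k:ℝ) ≠ 0 := by exact_mod_cast (by omega : k ≠ 0)
  have hcards : Fintype.card (ZMod (2*k+1) × Fin d) = (2*k+1)*d := by
    simp [ZMod.card]
  set e : (ZMod (2*k+1) × Fin d) ≃ Fin ((2*k+1)*d) := Fintype.equivFinOfCardEq hcards with he
  set es := e.symm with hes
  set P : α × ZMod (2*k+1) → Matrix (Fin ((2*k+1)*d)) (Fin ((2*k+1)*d)) ℂ :=
    fun x => (Qmat k x.2 ⊗ₖ Γ x.1).submatrix es es with hP
  set w : α × ZMod (2*k+1) → ℝ := fun x => wG x.1 / k with hw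
  have hkherm : ∀ x : α × ZMod (2*k+1), (Qmat k x.2 ⊗ₖ Γ x.1).IsHermitian := by
    intro x
    show (Qmat k x.2 ⊗ₖ Γ x.1)ᴴ = Qmat k x.2 ⊗ₖ Γ x.1
    rw [kron_conjT, (Qmat_herm k x.2).eq, (hΓherm x.1).eq]
  have hkidem : ∀ x : α × ZMod (2*k+1),
      (Qmat k x.2 ⊗ₖ Γ x.1) * (Qmat k x.2 ⊗ₖ Γ x.1) = Qmat k x.2 ⊗ₖ Γ x.1 := by
    intro x
    rw [← Matrix.mul_kronecker_mul, Qmat_idem, hΓidem]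
  have hΓtr : ∀ i, (Γ i).trace = 1 := by
    intro i
    rw [trace_eq_rank_of_proj (hΓherm i) (hΓidem i), hΓrank i]
    norm_num
  refine ⟨P, w, ?_, ?_, ?_, ?_, ?_, ?_, ?_⟩
  · -- Hermitian
    intro x
    exact (hkherm x).submatrix es
  · -- idempotent
    intro x
    rw [hP]
    simp only
    rw [Matrix.submatrix_mul_equiv, hkidem]
  · -- rank
    intro x
    have h1 : (P x).rank = (Qmat k x.2 ⊗ₖ Γ x.1).rank := Matrix.rank_submatrix _ es es
    have h2 : ((Qmat k x.2 ⊗ₖ Γ x.1).rank : ℂ) = (k:ℂ) := by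
      rw [← trace_eq_rank_of_proj (hkherm x) (hkidem x), Matrix.trace_kronecker,
        Qmat_trace k (by omega), hΓtr, mul_one]
    rw [h1]
    exact_mod_cast h2
  · -- orthogonality
    intro x y hadj
    rw [hP]
    simp only
    rw [Matrix.submatrix_mul_equiv, ← Matrix.mul_kronecker_mul]
    rcases hadj with h | h
    · rw [hΓorth _ _ h, Matrix.kronecker_zero]; rfl
    · rw [Qmat_orth k hk h, Matrix.zero_kronecker]; rfl
  · -- nonneg weights
    intro x
    exact div_nonneg (hw0 x.1) (Nat.cast_nonneg k)
  · -- independent set bound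
    intro K hK
    have hfib : ∀ b ∈ K.image Prod.fst, (K.filter (fun x => x.1 = b)).card ≤ k := by
      intro b _
      set F := K.filter (fun x => x.1 = b) with hF
      have hinj : Set.InjOn (Prod.snd : α × ZMod (2*k+1) → ZMod (2*k+1)) ↑F := by
        intro x hx y hy hxy
        have hx' := Finset.mem_filter.mp (Finset.mem_coe.mp hx)
        have hy' := Finset.mem_filter.mp (Finset.mem_coe.mp hy)
        exact Prod.ext (hx'.2.trans hy'.2.symm) hxy
      have hcard : F.card = (F.image Prod.snd).card := (Finset.card_image_of_injOn hinj).symm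
      rw [hcard]
      apply cyc_indep k (by omega)
      intro j hj j' hj' hnejj
      obtain ⟨x, hx, rfl⟩ := Finset.mem_image.mp (Finset.mem_coe.mp hj)
      obtain ⟨y, hy, rfl⟩ := Finset.mem_image.mp (Finset.mem_coe.mp hj')
      have hx' := Finset.mem_filter.mp hx
      have hy' := Finset.mem_filter.mp hy
      have hxy : x ≠ y := fun hcontra => hnejj (congrArg Prod.snd hcontra)
      intro hadjc
      exact hK (Finset.mem_coe.mpr hx'.1) (Finset.mem_coe.mpr hy'.1) hxy (Or.inr hadjc)
    have himage : IsIndep G ↑(K.image Prod.fst) := by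
      intro i hi i' hi' hne
      obtain ⟨x, hx, rfl⟩ := Finset.mem_image.mp (Finset.mem_coe.mp hi)
      obtain ⟨y, hy, rfl⟩ := Finset.mem_image.mp (Finset.mem_coe.mp hi')
      have hxy : x ≠ y := fun hcontra => hne (congrArg Prod.fst hcontra)
      intro hadjG
      exact hK (Finset.mem_coe.mpr hx) (Finset.mem_coe.mpr hy) hxy (Or.inl hadjG)
    calc ∑ x ∈ K, w x
        = ∑ b ∈ K.image Prod.fst, ∑ x ∈ K.filter (fun x => x.1 = b), w x := by
          exact (Finset.sum_fiberwise_of_maps_to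
            (fun x hx => Finset.mem_image_of_mem Prod.fst hx) w).symm
      _ ≤ ∑ b ∈ K.image Prod.fst, wG b := by
          apply Finset.sum_le_sum
          intro b hb
          have hconst : ∑ x ∈ K.filter (fun x => x.1 = b), w x
              = (K.filter (fun x => x.1 = b)).card • (wG b / k) := by
            rw [Finset.sum_congr rfl (fun x hx => show w x = wG b / k by
              simp only [hw]
              rw [(Finset.mem_filter.mp hx).2]), Finset.sum_const]
          rw [hconst, nsmul_eq_mul]
          have hcard := hfib b hb
          have hnn : 0 ≤ wG b / k := div_nonneg (hw0 b) (Nat.cast_nonneg k)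
          calc ((K.filter (fun x => x.1 = b)).card : ℝ) * (wG b / k)
              ≤ (k:ℝ) * (wG b / k) := by
                apply mul_le_mul_of_nonneg_right _ hnn
                exact_mod_cast hcard
            _ = wG b := by field_simp
      _ ≤ 1 := hwI _ himage
  · -- positive semidefinite
    have hsum : ∑ x : α × ZMod (2*k+1), (w x : ℂ) • P x
        = ((1 : Matrix (ZMod (2*k+1)) (ZMod (2*k+1)) ℂ) ⊗ₖ
            (∑ i, (wG i : ℂ) • Γ i)).submatrix es es := by
      have h1 : ∑ x : α × ZMod (2*k+1), (w x : ℂ) • P x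
          = (∑ x : α × ZMod (2*k+1),
              ((wG x.1 / k : ℝ) : ℂ) • (Qmat k x.2 ⊗ₖ Γ x.1)).submatrix es es := by
        ext a b
        simp [hP, hw, Matrix.sum_apply, Matrix.submatrix_apply, Matrix.smul_apply]
      rw [h1]
      refine congrArg (fun M : Matrix (ZMod (2*k+1) × Fin d) (ZMod (2*k+1) × Fin d) ℂ => M.submatrix ⇑es ⇑es) ?_
      rw [Fintype.sum_prod_type]
      calc ∑ i, ∑ j, ((wG i / k : ℝ) : ℂ) • (Qmat k j ⊗ₖ Γ i)
          = ∑ i, ((wG i / k : ℝ) : ℂ) • ((∑ j, Qmat k j) ⊗ₖ Γ i) := by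
            refine Finset.sum_congr rfl fun i _ => ?_
            rw [← sum_kron_left, Finset.smul_sum]
        _ = ∑ i, (wG i : ℂ) • ((1 : Matrix (ZMod (2*k+1)) (ZMod (2*k+1)) ℂ) ⊗ₖ Γ i) := by
            refine Finset.sum_congr rfl fun i _ => ?_
            rw [Qmat_sum k (by omega), Matrix.smul_kronecker, smul_smul]
            congr 1
            push_cast
            exact div_mul_cancel₀ _ hk0C
        _ = (1 : Matrix (ZMod (2*k+1)) (ZMod (2*k+1)) ℂ) ⊗ₖ (∑ i, (wG i : ℂ) • Γ i) := by
            rw [Finset.sum_congr rfl fun i _ => (Matrix.kronecker_smul _ _ _).symm,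
              sum_kron_right]
    have hone : ((η₁:ℂ) • (1 : Matrix (Fin ((2*k+1)*d)) (Fin ((2*k+1)*d)) ℂ))
        = ((η₁:ℂ) • ((1 : Matrix (ZMod (2*k+1)) (ZMod (2*k+1)) ℂ) ⊗ₖ
            (1 : Matrix (Fin d) (Fin d) ℂ))).submatrix es es := by
      rw [Matrix.one_kronecker_one,
        show ((η₁:ℂ) • (1 : Matrix (ZMod (2*k+1) × Fin d) (ZMod (2*k+1) × Fin d) ℂ)).submatrix ⇑es ⇑es
          = (η₁:ℂ) • ((1 : Matrix (ZMod (2*k+1) × Fin d) (ZMod (2*k+1) × Fin d) ℂ).submatrix ⇑es ⇑es) from rfl,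
        Matrix.submatrix_one_equiv]
    have hfinal : ∑ x : α × ZMod (2*k+1), (w x : ℂ) • P x
          - (η₁:ℂ) • (1 : Matrix (Fin ((2*k+1)*d)) (Fin ((2*k+1)*d)) ℂ)
        = ((1 : Matrix (ZMod (2*k+1)) (ZMod (2*k+1)) ℂ) ⊗ₖ
            (∑ i, (wG i : ℂ) • Γ i - (η₁:ℂ) • 1)).submatrix es es := by
      rw [hsum, hone, kron_sub_right, Matrix.kronecker_smul]
      rfl
    rw [hfinal]
    exact (one_kron_psd hη₁).submatrix es
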